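/- Let 0 < γ < 1/2, let m, R, R' be positive integers with 2 ≤ R' ≤ R, let D_1 be a probability distribution on Fin m with full support, let c, h_1, …, h_{R'−1} : Fin m → {−1,1}, set α = (1/2)·ln((1/2 + γ/2)/(1/2 − γ/2)), and let α_1, …, α_{R'−1} ∈ {0, α}. Define D_2, …, D_{R'} and Z_1, …, Z_{R'−1} by the boosting update. If KL(D_{R'}‖D_1) > 4·γ²·R, then either ∏_{r=1}^{R'−1} Z_r < exp(−2·γ²·R), or there exists r ∈ {1, …, R'−1} with α_r = α and ∑ i, D_{R'} i · c i · (−h_r i) > γ (equivalently, loss_{D_{R'}}(−h_r) < 1/2 − γ/2). -/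

import Mathlib

open Finset

/-- if the KL divergence `KL(D_{R'}‖D_1)` exceeds `4γ²R`, then either
the product of the normalization factors is already small, or the negation of one of
the previously used hypotheses has advantage more than `γ/2` under `D_{R'}`.
Here `D k` denotes `D_{k+1}`, i.e. `D 0` is the initial distribution `D_1`. -/
theorem stmt_14 (γ : ℝ) (hγ0 : 0 < γ) (hγ1 : γ < 1/2)
    (m R R' : ℕ) (hm : 0 < m) (hR'2 : 2 ≤ R') (hR'R : R' ≤ R)
    (D : ℕ → Fin m → ℝ)
    (hD0pos : ∀ i, 0 < D 0 i) (hD0sum : ∑ i, D 0 i = 1)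
    (c : Fin m → ℝ) (hc : ∀ i, c i = 1 ∨ c i = -1)
    (h : Fin (R' - 1) → Fin m → ℝ) (hh : ∀ r i, h r i = 1 ∨ h r i = -1)
    (α : Fin (R' - 1) → ℝ)
    (hα : ∀ r, α r = 0 ∨ α r = (1/2) * Real.log ((1/2 + γ/2)/(1/2 - γ/2)))
    (Z : Fin (R' - 1) → ℝ)
    (hZ : ∀ r : Fin (R' - 1), Z r = ∑ i, D r i * Real.exp (-(α r) * c i * h r i))
    (hDs : ∀ r : Fin (R' - 1), ∀ i,
      D (r + 1) i = D r i * Real.exp (-(α r) * c i * h r i) / Z r)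
    (hKL : 4 * γ^2 * R <
      ∑ i, D (R' - 1) i * Real.log (D (R' - 1) i / D 0 i)) :
    (∏ r, Z r < Real.exp (-(2 * γ^2 * R)))
      ∨ ∃ r : Fin (R' - 1),
          α r = (1/2) * Real.log ((1/2 + γ/2)/(1/2 - γ/2))
            ∧ γ < ∑ i, D (R' - 1) i * c i * (-(h r i)) := by
  by_contra hcon
  push_neg at hcon
  obtain ⟨hprod, hadv⟩ := hcon
  haveI : Nonempty (Fin m) := ⟨⟨0, hm⟩⟩
  set A := (1/2) * Real.log ((1/2 + γ/2)/(1/2 - γ/2)) with hAdef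
  have hden : (0:ℝ) < 1/2 - γ/2 := by linarith
  have hratio1 : (1:ℝ) ≤ (1/2 + γ/2)/(1/2 - γ/2) := by
    rw [le_div_iff₀ hden]; linarith
  have hA0 : 0 ≤ A := by
    have := Real.log_nonneg hratio1
    rw [hAdef]; linarith
  have hA2 : A ≤ 2*γ := by
    have hle : (1/2 + γ/2)/(1/2 - γ/2) ≤ Real.exp (4*γ) := by
      have h1 : (1/2 + γ/2)/(1/2 - γ/2) ≤ 1 + 4*γ := by
        rw [div_le_iff₀ hden]; nlinarith
      have h2 := Real.add_one_le_exp (4*γ)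
      linarith
    have hlog : Real.log ((1/2 + γ/2)/(1/2 - γ/2)) ≤ 4*γ :=
      (Real.log_le_iff_le_exp (by linarith)).2 hle
    rw [hAdef]; linarith
  -- main induction
  have key : ∀ k, k ≤ R' - 1 → (∀ i, 0 < D k i) ∧ (∑ i, D k i = 1) ∧
      (∀ i, Real.log (D k i) = Real.log (D 0 i) -
        ∑ r ∈ univ.filter (fun r : Fin (R'-1) => (r:ℕ) < k),
          (α r * c i * h r i + Real.log (Z r))) := by
    intro k
    induction k with
    | zero =>
      intro _
      refine ⟨hD0pos, hD0sum, fun i => ?_⟩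
      simp
    | succ k ih =>
      intro hk1
      have hk : k < R' - 1 := by omega
      obtain ⟨hpos, hsum, hlog⟩ := ih (by omega)
      set r₀ : Fin (R'-1) := ⟨k, hk⟩ with hr₀
      have hr₀v : (r₀ : ℕ) = k := rfl
      have hZr : Z r₀ = ∑ i, D k i * Real.exp (-(α r₀) * c i * h r₀ i) := by
        rw [hZ r₀, hr₀v]
      have hZpos : 0 < Z r₀ := by
        rw [hZr]
        exact Finset.sum_pos (fun i _ => mul_pos (hpos i) (Real.exp_pos _))
          Finset.univ_nonempty
      have hDk1 : ∀ i, D (k+1) i = D k i * Real.exp (-(α r₀) * c i * h r₀ i) / Z r₀ := by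
        intro i
        have := hDs r₀ i
        rwa [hr₀v] at this
      have hpos' : ∀ i, 0 < D (k+1) i := by
        intro i
        rw [hDk1 i]
        exact div_pos (mul_pos (hpos i) (Real.exp_pos _)) hZpos
      refine ⟨hpos', ?_, ?_⟩
      · simp_rw [hDk1]
        rw [← Finset.sum_div, ← hZr, div_self hZpos.ne']
      · intro i
        have hfil : univ.filter (fun r : Fin (R'-1) => (r:ℕ) < k+1)
            = insert r₀ (univ.filter (fun r : Fin (R'-1) => (r:ℕ) < k)) := by
          ext r
          simp only [mem_filter, mem_univ, true_and, mem_insert, hr₀, Fin.ext_iff]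
          omega
        rw [hDk1 i,
          Real.log_div (mul_pos (hpos i) (Real.exp_pos _)).ne' hZpos.ne',
          Real.log_mul (hpos i).ne' (Real.exp_pos _).ne', Real.log_exp,
          hlog i, hfil, Finset.sum_insert (by simp [hr₀v])]
        ring
  obtain ⟨hposn, hsumn, hlogn⟩ := key (R'-1) le_rfl
  have hfiln : univ.filter (fun r : Fin (R'-1) => (r:ℕ) < R'-1) = univ := by
    apply Finset.filter_true_of_mem
    intro r _
    exact r.isLt
  -- rewrite KL
  have hKL' : ∑ i, D (R'-1) i * Real.log (D (R'-1) i / D 0 i)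
      = (∑ r, α r * (∑ i, D (R'-1) i * c i * (-(h r i)))) - ∑ r, Real.log (Z r) := by
    have hpt : ∀ i, D (R'-1) i * Real.log (D (R'-1) i / D 0 i)
        = ∑ r, (D (R'-1) i * (α r * c i * (-(h r i))) - D (R'-1) i * Real.log (Z r)) := by
      intro i
      rw [Real.log_div (hposn i).ne' (hD0pos i).ne', hlogn i, hfiln]
      trans (∑ r, -(D (R'-1) i * (α r * c i * h r i + Real.log (Z r))))
      · rw [Finset.sum_neg_distrib, ← Finset.mul_sum]
        ring
      · exact Finset.sum_congr rfl fun r _ => by ring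
    calc ∑ i, D (R'-1) i * Real.log (D (R'-1) i / D 0 i)
        = ∑ i, ∑ r, (D (R'-1) i * (α r * c i * (-(h r i))) - D (R'-1) i * Real.log (Z r)) := by
          exact Finset.sum_congr rfl (fun i _ => hpt i)
      _ = ∑ r, ∑ i, (D (R'-1) i * (α r * c i * (-(h r i))) - D (R'-1) i * Real.log (Z r)) :=
          Finset.sum_comm
      _ = (∑ r, α r * (∑ i, D (R'-1) i * c i * (-(h r i)))) - ∑ r, Real.log (Z r) := by
          rw [← Finset.sum_sub_distrib]
          apply Finset.sum_congr rfl
          intro r _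
          rw [Finset.sum_sub_distrib, ← Finset.sum_mul, hsumn, one_mul,
            Finset.mul_sum]
          congr 1
          apply Finset.sum_congr rfl
          intro i _
          ring
  -- bound each term
  have hterm : ∀ r : Fin (R'-1), α r * (∑ i, D (R'-1) i * c i * (-(h r i))) ≤ 2*γ^2 := by
    intro r
    rcases hα r with h0 | hA
    · rw [h0, zero_mul]; positivity
    · have hle : ∑ i, D (R'-1) i * c i * (-(h r i)) ≤ γ := hadv r hA
      calc α r * (∑ i, D (R'-1) i * c i * (-(h r i))) ≤ α r * γ := by
            rw [hA]; exact mul_le_mul_of_nonneg_left hle hA0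
        _ ≤ 2*γ*γ := by
            rw [hA]; exact mul_le_mul_of_nonneg_right hA2 hγ0.le
        _ = 2*γ^2 := by ring
  have hsumterm : (∑ r, α r * (∑ i, D (R'-1) i * c i * (-(h r i)))) ≤ 2*γ^2*R := by
    calc (∑ r, α r * (∑ i, D (R'-1) i * c i * (-(h r i))))
        ≤ ∑ _r : Fin (R'-1), 2*γ^2 := Finset.sum_le_sum (fun r _ => hterm r)
      _ = ((R':ℝ)-1) * (2*γ^2) := by
          rw [Finset.sum_const, Finset.card_univ, Fintype.card_fin, nsmul_eq_mul,
            Nat.cast_sub (by omega), Nat.cast_one]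
      _ ≤ R * (2*γ^2) := by
          have hcast : (R':ℝ) ≤ R := Nat.cast_le.2 hR'R
          apply mul_le_mul_of_nonneg_right (by linarith) (by positivity)
      _ = 2*γ^2*R := by ring
  -- Z positivity and log of product
  have hZpos : ∀ r : Fin (R'-1), 0 < Z r := by
    intro r
    have hk : (r:ℕ) ≤ R'-1 := le_of_lt r.isLt
    obtain ⟨hp, _, _⟩ := key r hk
    rw [hZ r]
    exact Finset.sum_pos (fun i _ => mul_pos (hp i) (Real.exp_pos _))
      Finset.univ_nonempty
  have hprodpos : 0 < ∏ r, Z r := Finset.prod_pos (fun r _ => hZpos r)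
  have hlogprod : -(2*γ^2*R) ≤ ∑ r, Real.log (Z r) := by
    have h1 : Real.log (Real.exp (-(2*γ^2*R))) ≤ Real.log (∏ r, Z r) :=
      Real.log_le_log (Real.exp_pos _) hprod
    rwa [Real.log_exp, Real.log_prod (fun r _ => (hZpos r).ne')] at h1
  rw [hKL'] at hKL
  linarith
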